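/- arXiv:2210.08545 — 4 statements merged into one kernel-verified Lean document; each statement's English description precedes it below -/
import Mathlib

section
/- With ζ₀ = ζ₀(a) as in the D/M/1 model (μ fixed, aμ > 1), the derivative with respect to a of ζ₀/(1-ζ₀) equals -μ·ζ₀/((1-ζ₀)·(1 - a·μ·ζ₀)). -/
/-- With `ζ₀ = z a` as in the D/M/1 model (`μ` fixed, `a*μ > 1`), the derivative with
respect to `a` of `z a / (1 - z a)` equals `-μ * z a / ((1 - z a) * (1 - a*μ*(z a)))`. -/
theorem stmt5 (μ : ℝ) (hμ : 0 < μ) (z : ℝ → ℝ)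
    (hz : ∀ a ∈ Set.Ioi (1/μ), z a ∈ Set.Ioo (0:ℝ) 1)
    (hfe : ∀ a ∈ Set.Ioi (1/μ), z a = Real.exp (-(a * μ) * (1 - z a)))
    (a : ℝ) (ha : a ∈ Set.Ioi (1/μ))
    (hdiff : DifferentiableAt ℝ z a) :
    deriv (fun a => z a / (1 - z a)) a
      = -(μ * z a) / ((1 - z a) * (1 - a * μ * z a)) := by
  obtain ⟨hz0, hz1⟩ := hz a ha
  have haμ : 1 < a * μ := by
    have := (Set.mem_Ioi.mp ha)
    calc (1:ℝ) = (1/μ) * μ := by field_simp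
    _ < a * μ := by exact mul_lt_mul_of_pos_right this hμ
  have hfea := hfe a ha
  -- key : a*μ*z a < 1
  set t : ℝ := a * μ * (1 - z a) with ht
  have htpos : 0 < t := mul_pos (by linarith) (by linarith)
  have hzexp : z a = Real.exp (-t) := by rw [hfea, ht]; ring_nf
  have hkey : a * μ * z a < 1 := by
    have hexp : t + 1 < Real.exp t := Real.add_one_lt_exp (ne_of_gt htpos)
    have h1 : z a * Real.exp t = 1 := by
      rw [hzexp, ← Real.exp_add]; simp
    have h2 : a * μ * z a * (Real.exp t - 1) = t := by
      have : a * μ * (z a * Real.exp t) - a * μ * z a = t := by rw [h1]; ring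
      linarith [this]
    nlinarith [Real.exp_pos t]
  have hne : 1 - a * μ * z a ≠ 0 := by linarith
  have hne1 : 1 - z a ≠ 0 := by linarith
  set z' : ℝ := deriv z a with hz'
  have hZ : HasDerivAt z z' a := hdiff.hasDerivAt
  -- derivative of the exponential expression
  have hu : HasDerivAt (fun b => -(b * μ) * (1 - z b))
      ((-(1 * μ)) * (1 - z a) + (-(a * μ)) * (0 - z')) a := by
    exact (((hasDerivAt_id a).mul_const μ).neg).mul ((hasDerivAt_const a 1).sub hZ)
  have hF : HasDerivAt (fun b => Real.exp (-(b * μ) * (1 - z b)))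
      (Real.exp (-(a * μ) * (1 - z a)) * ((-(1 * μ)) * (1 - z a) + (-(a * μ)) * (0 - z'))) a :=
    hu.exp
  have heq : (fun b => Real.exp (-(b * μ) * (1 - z b))) =ᶠ[nhds a] z := by
    filter_upwards [isOpen_Ioi.mem_nhds ha] with b hb
    exact (hfe b hb).symm
  have hZ2 : HasDerivAt z
      (Real.exp (-(a * μ) * (1 - z a)) * ((-(1 * μ)) * (1 - z a) + (-(a * μ)) * (0 - z'))) a :=
    hF.congr_of_eventuallyEq heq.symm
  have huniq : z' = Real.exp (-(a * μ) * (1 - z a)) *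
      ((-(1 * μ)) * (1 - z a) + (-(a * μ)) * (0 - z')) := hZ.unique hZ2
  rw [← hfea] at huniq
  have hz'eq : z' * (1 - a * μ * z a) = -(μ * z a * (1 - z a)) := by
    linear_combination huniq
  have hq : HasDerivAt (fun b => z b / (1 - z b))
      ((z' * (1 - z a) - z a * (0 - z')) / (1 - z a) ^ 2) a :=
    hZ.div ((hasDerivAt_const a 1).sub hZ) hne1
  rw [hq.deriv]
  rw [div_eq_div_iff (pow_ne_zero 2 hne1) (mul_ne_zero hne1 hne)]
  linear_combination (1 - z a) * hz'eq
end

section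
/- For each c ∈ (0,1), the equation (1 - z + z·ln z)/z = c/(1-c) has exactly one solution z ∈ (0,1), and it is given by z = -1/ω₋(-exp(-1/(1-c))), where ω₋ is the lower real branch of the Lambert W function (satisfying ω₋(s)e^{ω₋(s)} = s and ω₋(x) ≤ -1 on [-1/e, 0)). -/
private lemma stmt8_Gdef {z : ℝ} (hz : 0 < z) :
    (1 - z + z * Real.log z) / z = z⁻¹ - 1 + Real.log z := by
  field_simp

private lemma stmt8_G_anti :
    StrictAntiOn (fun z : ℝ => z⁻¹ - 1 + Real.log z) (Set.Ioo 0 1) := by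
  apply strictAntiOn_of_deriv_neg (convex_Ioo 0 1)
  · apply ContinuousOn.add
    · exact (continuousOn_id.inv₀ fun x hx => ne_of_gt hx.1).sub continuousOn_const
    · exact Real.continuousOn_log.mono (fun x hx => ne_of_gt hx.1)
  · intro x hx
    rw [interior_Ioo] at hx
    have hx0 : 0 < x := hx.1
    have hd : HasDerivAt (fun z : ℝ => z⁻¹ - 1 + Real.log z) (-(x^2)⁻¹ + x⁻¹) x :=
      ((hasDerivAt_inv hx0.ne').sub_const 1).add (Real.hasDerivAt_log hx0.ne')
    rw [hd.deriv]
    have h1 : x⁻¹ < (x^2)⁻¹ := by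
      apply inv_strictAnti₀ (by positivity)
      nlinarith [hx.2]
    linarith

private lemma stmt8_h_anti :
    StrictAntiOn (fun w : ℝ => w * Real.exp w) (Set.Iic (-1)) := by
  apply strictAntiOn_of_deriv_neg (convex_Iic (-1))
  · exact (continuous_id.mul Real.continuous_exp).continuousOn
  · intro x hx
    rw [interior_Iic] at hx
    have hd : HasDerivAt (fun w : ℝ => w * Real.exp w)
        (1 * Real.exp x + x * Real.exp x) x :=
      (hasDerivAt_id x).mul (Real.hasDerivAt_exp x)
    rw [hd.deriv]
    have := Real.exp_pos x
    nlinarith [hx.out]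

/-- For each `c ∈ (0,1)`, the equation `(1 - z + z*ln z)/z = c/(1-c)` has exactly one
solution `z ∈ (0,1)`, and any such solution equals `-1/ω₋(-exp (-1/(1-c)))`, where `ω₋`
is the lower real branch of the Lambert W function, encoded as any real `w ≤ -1` with
`w * e^w = -exp (-1/(1-c))`. -/
theorem stmt8 (c : ℝ) (hc : c ∈ Set.Ioo (0:ℝ) 1) :
    (∃! z : ℝ, z ∈ Set.Ioo (0:ℝ) 1 ∧ (1 - z + z * Real.log z) / z = c / (1 - c)) ∧
    (∀ z ∈ Set.Ioo (0:ℝ) 1, (1 - z + z * Real.log z) / z = c / (1 - c) →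
      ∀ w : ℝ, w ≤ -1 → w * Real.exp w = -Real.exp (-(1/(1 - c))) → z = -1 / w) := by
  obtain ⟨hc0, hc1⟩ := hc
  have h1c : 0 < 1 - c := by linarith
  set t : ℝ := c / (1 - c) with ht_def
  have ht : 0 < t := div_pos hc0 h1c
  set G : ℝ → ℝ := fun z => z⁻¹ - 1 + Real.log z with hG_def
  set a : ℝ := Real.exp (-(1 + t)) with ha_def
  have ha0 : 0 < a := Real.exp_pos _
  have ha1 : a < 1 := Real.exp_lt_one_iff.mpr (by linarith)
  have hGa : t < G a := by
    have hlog : Real.log a = -(1 + t) := Real.log_exp _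
    have hinv : a⁻¹ = Real.exp (1 + t) := by
      rw [ha_def, ← Real.exp_neg, neg_neg]
    have he1 : (2.7182818283 : ℝ) < Real.exp 1 := Real.exp_one_gt_d9
    have het : 1 + t ≤ Real.exp t := by linarith [Real.add_one_le_exp t]
    have hexp : Real.exp (1 + t) = Real.exp 1 * Real.exp t := by
      rw [← Real.exp_add]
    have : 2 + 2 * t < Real.exp (1 + t) := by nlinarith [Real.exp_pos t]
    simp only [hG_def, hlog, hinv]
    linarith
  have hG1 : G 1 = 0 := by simp [hG_def]
  have hcont : ContinuousOn G (Set.Icc a 1) := by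
    apply ContinuousOn.add
    · exact (continuousOn_id.inv₀ fun x hx => ne_of_gt (lt_of_lt_of_le ha0 hx.1)).sub
        continuousOn_const
    · exact Real.continuousOn_log.mono (fun x hx => ne_of_gt (lt_of_lt_of_le ha0 hx.1))
  have hIVT := intermediate_value_Ioo' (le_of_lt ha1) hcont
  have htmem : t ∈ Set.Ioo (G 1) (G a) := ⟨by rw [hG1]; exact ht, hGa⟩
  obtain ⟨z, hz, hGz⟩ := hIVT htmem
  have hzmem : z ∈ Set.Ioo (0:ℝ) 1 := ⟨lt_trans ha0 hz.1, hz.2⟩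
  -- key: on Ioo 0 1, the equation is equivalent to G z = t
  have key : ∀ y ∈ Set.Ioo (0:ℝ) 1,
      ((1 - y + y * Real.log y) / y = t ↔ G y = t) := by
    intro y hy
    rw [stmt8_Gdef hy.1]
  constructor
  · refine ⟨z, ⟨hzmem, (key z hzmem).mpr hGz⟩, ?_⟩
    intro y ⟨hymem, hyeq⟩
    exact stmt8_G_anti.injOn hymem hzmem (((key y hymem).mp hyeq).trans hGz.symm)
  · intro z hzm heq w hw hwe
    have hz0 : 0 < z := hzm.1
    have hGz : G z = t := (key z hzm).mp heq
    have hsum : Real.log z + z⁻¹ = 1 / (1 - c) := by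
      have : t + 1 = 1 / (1 - c) := by rw [ht_def]; field_simp; ring
      simp only [hG_def] at hGz
      linarith
    set w₀ : ℝ := -1 / z with hw0_def
    have hw0le : w₀ ≤ -1 := by
      rw [hw0_def, div_le_iff₀ hz0]
      nlinarith [hzm.2]
    have hw0eq : w₀ * Real.exp w₀ = -Real.exp (-(1 / (1 - c))) := by
      have hexpw0 : Real.exp w₀ = z * Real.exp (-(1 / (1 - c))) := by
        have : w₀ = Real.log z + -(1 / (1 - c)) := by
          rw [hw0_def, neg_div, one_div]; linarith [hsum]
        rw [this, Real.exp_add, Real.exp_log hz0]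
      rw [hexpw0, hw0_def]
      field_simp
    have : w = w₀ := stmt8_h_anti.injOn hw hw0le (by rw [hwe, hw0eq])
    rw [this, hw0_def]
    field_simp
end

section
/- Let μ > 0, a > 0, and ζ₀ = exp(-aμ(1-ζ₀)) ∈ (0,1). Define f on (0,∞) piecewise by f(x) = μ^{k+1}·ζ₀·x^{k-1}·(x - k·a)·e^{-μx}/k! for x ∈ (k·a, (k+1)·a), k = 0, 1, 2, ... (with the convention x^{-1}·(x-0) = 1 for k = 0). Then ∫₀^∞ f(x) dx = ζ₀. -/
open MeasureTheory

noncomputable def stmt12u (c : ℝ) (k : ℕ) : ℝ :=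
  Real.exp (-(((k:ℝ)+1)*c)) * ∑ j ∈ Finset.range (k+1), (((k:ℝ)+1)*c)^j / (Nat.factorial j)

noncomputable def stmt12d (c : ℝ) (k : ℕ) : ℝ :=
  Real.exp (-((k:ℝ)*c)) * ((k:ℝ)*c)^k / (Nat.factorial k)

noncomputable def stmt12T (c : ℝ) : ℕ → ℝ
  | 0 => 1
  | (k+1) => (1-c) * stmt12u c k + stmt12d c (k+1)

lemma stmt12_hasDeriv (μ : ℝ) (m : ℕ) (x : ℝ) :
    HasDerivAt (fun y : ℝ => -(Real.exp (-(μ*y)) * ∑ j ∈ Finset.range (m+1), (μ*y)^j / (Nat.factorial j)))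
      (μ * Real.exp (-(μ*x)) * (μ*x)^m / (Nat.factorial m)) x := by
  have hE : ∀ x : ℝ, HasDerivAt (fun y : ℝ => Real.exp (-(μ*y))) (-μ * Real.exp (-(μ*x))) x := by
    intro x
    simpa [mul_comm] using (((hasDerivAt_id x).const_mul μ).neg.exp)
  induction m with
  | zero =>
      have h := (hE x).fun_neg
      have heq : (fun y : ℝ => -Real.exp (-(μ*y)))
          = (fun y : ℝ => -(Real.exp (-(μ*y)) * ∑ j ∈ Finset.range (0+1), (μ*y)^j / (Nat.factorial j))) := by
        funext y; simp
      rw [heq] at h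
      refine h.congr_deriv ?_
      simp
  | succ n ih =>
      have hP : HasDerivAt (fun y : ℝ => (μ*y)^(n+1) / (Nat.factorial (n+1)))
          ((n+1) * (μ*x)^n * μ / (Nat.factorial (n+1))) x := by
        have h1 : HasDerivAt (fun y : ℝ => μ*y) μ x := by
          simpa [mul_comm] using ((hasDerivAt_id x).const_mul μ)
        have := (h1.pow (n+1)).div_const ((Nat.factorial (n+1) : ℝ))
        simpa [mul_comm, mul_assoc, mul_left_comm] using this
      have hterm := ((hE x).fun_mul hP)
      have h := ih.fun_sub hterm
      have heq : (fun y : ℝ => -(Real.exp (-(μ*y)) * ∑ j ∈ Finset.range (n+1), (μ*y)^j / (Nat.factorial j))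
            - Real.exp (-(μ*y)) * ((μ*y)^(n+1) / (Nat.factorial (n+1))))
          = (fun y : ℝ => -(Real.exp (-(μ*y)) * ∑ j ∈ Finset.range (n+1+1), (μ*y)^j / (Nat.factorial j))) := by
        funext y
        rw [Finset.sum_range_succ _ (n+1)]
        ring
      rw [heq] at h
      refine h.congr_deriv ?_
      have hfac : ((Nat.factorial (n+1) : ℝ)) = (n+1) * (Nat.factorial n) := by
        push_cast [Nat.factorial_succ]; ring
      have hpos : ((Nat.factorial n : ℝ)) ≠ 0 := by positivity
      have hpos2 : ((n:ℝ)+1) ≠ 0 := by positivity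
      rw [hfac]
      field_simp [hfac]
      ring

lemma stmt12_FTC (μ a : ℝ) (m : ℕ) (A B : ℝ) :
    ∫ x in A..B, μ^(m+2) * x^m * (x - (m+1)*a) * Real.exp (-(μ*x)) / (Nat.factorial (m+1))
    = (fun y : ℝ => -(Real.exp (-(μ*y)) * ∑ j ∈ Finset.range (m+2), (μ*y)^j / (Nat.factorial j))
        + (a*μ) * (Real.exp (-(μ*y)) * ∑ j ∈ Finset.range (m+1), (μ*y)^j / (Nat.factorial j))) B
    - (fun y : ℝ => -(Real.exp (-(μ*y)) * ∑ j ∈ Finset.range (m+2), (μ*y)^j / (Nat.factorial j))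
        + (a*μ) * (Real.exp (-(μ*y)) * ∑ j ∈ Finset.range (m+1), (μ*y)^j / (Nat.factorial j))) A := by
  apply intervalIntegral.integral_eq_sub_of_hasDerivAt
  · intro x hx
    have h1 := stmt12_hasDeriv μ (m+1) x
    have h2 := ((stmt12_hasDeriv μ m x).const_mul (a*μ)).fun_neg
    have h := h1.fun_add h2
    have heq : (fun x : ℝ =>
          -(Real.exp (-(μ * x)) * ∑ j ∈ Finset.range (m + 1 + 1), (μ * x) ^ j / (Nat.factorial j)) +
            -(a * μ * -(Real.exp (-(μ * x)) * ∑ j ∈ Finset.range (m + 1), (μ * x) ^ j / (Nat.factorial j))))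
        = (fun y : ℝ => -(Real.exp (-(μ*y)) * ∑ j ∈ Finset.range (m+2), (μ*y)^j / (Nat.factorial j))
        + (a*μ) * (Real.exp (-(μ*y)) * ∑ j ∈ Finset.range (m+1), (μ*y)^j / (Nat.factorial j))) := by
      funext y; ring
    rw [heq] at h
    convert h using 1
    have hfac : ((Nat.factorial (m+1) : ℝ)) = (m+1) * (Nat.factorial m) := by
      push_cast [Nat.factorial_succ]; ring
    have hpos : ((Nat.factorial m : ℝ)) ≠ 0 := by positivity
    have hpos2 : ((m:ℝ)+1) ≠ 0 := by positivity
    rw [hfac]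
    field_simp
    ring
  · apply Continuous.intervalIntegrable
    fun_prop

lemma stmt12_piece_eq (μ a : ℝ) (m : ℕ) :
    ((fun y : ℝ => -(Real.exp (-(μ*y)) * ∑ j ∈ Finset.range (m+2), (μ*y)^j / (Nat.factorial j))
        + (a*μ) * (Real.exp (-(μ*y)) * ∑ j ∈ Finset.range (m+1), (μ*y)^j / (Nat.factorial j))) (((m:ℝ)+2)*a))
    - ((fun y : ℝ => -(Real.exp (-(μ*y)) * ∑ j ∈ Finset.range (m+2), (μ*y)^j / (Nat.factorial j))
        + (a*μ) * (Real.exp (-(μ*y)) * ∑ j ∈ Finset.range (m+1), (μ*y)^j / (Nat.factorial j))) (((m:ℝ)+1)*a))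
    = stmt12T (a*μ) (m+1) - stmt12T (a*μ) (m+2) := by
  simp only [stmt12T, stmt12u, stmt12d]
  push_cast
  have h1 : μ * (((m:ℝ)+2)*a) = ((m:ℝ)+2)*(a*μ) := by ring
  have h2 : μ * (((m:ℝ)+1)*a) = ((m:ℝ)+1)*(a*μ) := by ring
  have h3 : -((((m:ℝ))+1+1)*(a*μ)) = -(((m:ℝ)+2)*(a*μ)) := by ring
  have h4 : ((((m:ℝ))+1+1)*(a*μ)) = (((m:ℝ)+2)*(a*μ)) := by ring
  rw [h1, h2, h3, h4]
  rw [Finset.sum_range_succ _ (m+1), Finset.sum_range_succ _ (m+1)]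
  have hfac : ((Nat.factorial (m+2) : ℝ)) = ((m:ℝ)+2) * (Nat.factorial (m+1)) := by
    rw [Nat.factorial_succ]; push_cast; ring
  rw [hfac]
  have hp1 : ((((m:ℝ))+2)*(a*μ))^(m+2) = ((((m:ℝ))+2)*(a*μ))^(m+1) * ((((m:ℝ))+2)*(a*μ)) := by
    ring
  rw [hp1]
  have hpos : ((Nat.factorial (m+1) : ℝ)) ≠ 0 := by positivity
  have hpos2 : ((m:ℝ)+2) ≠ 0 := by positivity
  field_simp
  ring

lemma stmt12_pow_le_fact_mul_exp (k : ℕ) : ((k:ℝ))^k ≤ (Nat.factorial k) * Real.exp k := by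
  have h := Real.sum_le_exp_of_nonneg (x := (k:ℝ)) (by positivity) (k+1)
  have h2 : ((k:ℝ))^k / (Nat.factorial k) ≤ ∑ i ∈ Finset.range (k+1), (k:ℝ)^i / (Nat.factorial i) := by
    apply Finset.single_le_sum (f := fun i => (k:ℝ)^i / (Nat.factorial i))
    · intro i _; positivity
    · simp
  have h3 := h2.trans h
  rw [div_le_iff₀ (by positivity)] at h3
  linarith [h3]

lemma stmt12_term_mono (y : ℝ) (k : ℕ) (hy : ((k:ℝ)) ≤ y) (h0 : 0 ≤ y) :
    ∀ j ≤ k, y^j / (Nat.factorial j) ≤ y^k / (Nat.factorial k) := by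
  induction k with
  | zero => intro j hj; interval_cases j; simp
  | succ n ih =>
      intro j hj
      rcases Nat.lt_or_ge j (n+1) with h | h
      · have hy' : ((n:ℝ)) ≤ y := le_trans (by push_cast; linarith) hy
        refine (ih hy' j (Nat.lt_succ_iff.mp h)).trans ?_
        rw [div_le_div_iff₀ (by positivity) (by positivity)]
        have hfac : ((Nat.factorial (n+1) : ℝ)) = ((n:ℝ)+1) * (Nat.factorial n) := by
          rw [Nat.factorial_succ]; push_cast; ring
        rw [hfac, pow_succ]
        have h1 : ((n:ℝ)+1) ≤ y := by push_cast at hy ⊢; linarith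
        have h2 : (0:ℝ) ≤ y^n := by positivity
        have h3 : (0:ℝ) < (Nat.factorial n : ℝ) := by positivity
        nlinarith [h2, h3, mul_le_mul_of_nonneg_left h1 h2]
      · have : j = n+1 := le_antisymm hj h
        simp [this]

lemma stmt12_d_le (c : ℝ) (hc : 1 < c) (k : ℕ) : stmt12d c k ≤ (c * Real.exp (1-c))^k := by
  unfold stmt12d
  have hc0 : 0 < c := by linarith
  have hr : (c * Real.exp (1-c))^k = c^k * Real.exp k * Real.exp (-((k:ℝ)*c)) := by
    rw [mul_pow, ← Real.exp_nat_mul]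
    have h5 : Real.exp ((k:ℝ)*(1-c)) = Real.exp (k:ℝ) * Real.exp (-((k:ℝ)*c)) := by
      rw [← Real.exp_add]; congr 1; ring
    rw [h5]; ring
  rw [hr, mul_pow]
  rw [div_le_iff₀ (by positivity)]
  have h1 : ((k:ℝ))^k ≤ (Nat.factorial k) * Real.exp k := stmt12_pow_le_fact_mul_exp k
  have he : (0:ℝ) < Real.exp (-((k:ℝ)*c)) := Real.exp_pos _
  have hck : (0:ℝ) < c^k := by positivity
  calc Real.exp (-((k:ℝ)*c)) * ((k:ℝ)^k * c^k)
      ≤ Real.exp (-((k:ℝ)*c)) * (((Nat.factorial k) * Real.exp k) * c^k) := by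
        apply mul_le_mul_of_nonneg_left _ he.le
        exact mul_le_mul_of_nonneg_right h1 hck.le
    _ = c^k * Real.exp k * Real.exp (-((k:ℝ)*c)) * (Nat.factorial k) := by ring

lemma stmt12_d_nonneg (c : ℝ) (hc : 1 < c) (k : ℕ) : 0 ≤ stmt12d c k := by
  unfold stmt12d; positivity

lemma stmt12_u_nonneg (c : ℝ) (hc : 1 < c) (k : ℕ) : 0 ≤ stmt12u c k := by
  unfold stmt12u
  apply mul_nonneg (Real.exp_pos _).le
  apply Finset.sum_nonneg
  intro j _
  have : (0:ℝ) ≤ ((k:ℝ)+1)*c := by positivity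
  positivity

lemma stmt12_u_le (c : ℝ) (hc : 1 < c) (k : ℕ) :
    stmt12u c k ≤ ((k:ℝ)+1) * Real.exp (1-c) * (c * Real.exp (1-c))^k := by
  have hc0 : (0:ℝ) < c := by linarith
  have hy0 : (0:ℝ) ≤ ((k:ℝ)+1)*c := by positivity
  -- sum bound
  have hsum : ∑ j ∈ Finset.range (k+1), (((k:ℝ)+1)*c)^j / (Nat.factorial j)
      ≤ ((k:ℝ)+1) * ((((k:ℝ)+1)*c)^k / (Nat.factorial k)) := by
    have := Finset.sum_le_card_nsmul (Finset.range (k+1))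
      (fun j => (((k:ℝ)+1)*c)^j / (Nat.factorial j)) ((((k:ℝ)+1)*c)^k / (Nat.factorial k)) ?_
    · simpa [nsmul_eq_mul] using this
    · intro j hj
      exact stmt12_term_mono _ k (by nlinarith [Nat.cast_nonneg (α := ℝ) k]) hy0 j
        (Nat.lt_succ_iff.mp (Finset.mem_range.mp hj))
  -- w bound : exp(-((k+1)c)) * ((k+1)c)^k / k! ≤ exp(1-c) * r^k
  have hw : Real.exp (-(((k:ℝ)+1)*c)) * ((((k:ℝ)+1)*c)^k / (Nat.factorial k))
      ≤ Real.exp (1-c) * (c * Real.exp (1-c))^k := by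
    have hkk : (((k:ℝ)+1))^k ≤ ((k:ℝ))^k * Real.exp 1 := by
      rcases Nat.eq_zero_or_pos k with h | h
      · simp [h]
      · have hk0 : (0:ℝ) < (k:ℝ) := by exact_mod_cast h
        have h1 : ((k:ℝ)+1) = (k:ℝ) * (1 + 1/(k:ℝ)) := by field_simp
        rw [h1, mul_pow]
        apply mul_le_mul_of_nonneg_left _ (by positivity)
        have h2 : (1 + 1/(k:ℝ)) ≤ Real.exp (1/(k:ℝ)) := by
          have := Real.add_one_le_exp (1/(k:ℝ)); linarith
        calc (1 + 1/(k:ℝ))^k ≤ (Real.exp (1/(k:ℝ)))^k := by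
              apply pow_le_pow_left₀ (by positivity) h2
          _ = Real.exp 1 := by
              rw [← Real.exp_nat_mul]; congr 1; field_simp
    have hfk : ((k:ℝ))^k ≤ (Nat.factorial k) * Real.exp k := stmt12_pow_le_fact_mul_exp k
    have hnum : ((((k:ℝ)+1)*c)^k) ≤ (Nat.factorial k) * Real.exp k * Real.exp 1 * c^k := by
      rw [mul_pow]
      calc (((k:ℝ)+1))^k * c^k ≤ ((k:ℝ))^k * Real.exp 1 * c^k := by
            apply mul_le_mul_of_nonneg_right hkk (by positivity)
        _ ≤ ((Nat.factorial k) * Real.exp k) * Real.exp 1 * c^k := by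
            apply mul_le_mul_of_nonneg_right (mul_le_mul_of_nonneg_right hfk (Real.exp_pos 1).le) (by positivity)
        _ = (Nat.factorial k) * Real.exp k * Real.exp 1 * c^k := by ring
    have hrhs : Real.exp (1-c) * (c * Real.exp (1-c))^k
        = Real.exp (-(((k:ℝ)+1)*c)) * (Real.exp (k:ℝ) * Real.exp 1 * c^k) := by
      rw [mul_pow, ← Real.exp_nat_mul]
      rw [show Real.exp (-(((k:ℝ)+1)*c)) * (Real.exp (k:ℝ) * Real.exp 1 * c^k)
          = (Real.exp (-(((k:ℝ)+1)*c)) * Real.exp (k:ℝ) * Real.exp 1) * c^k by ring,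
        ← Real.exp_add, ← Real.exp_add,
        show Real.exp (1-c) * (c^k * Real.exp ((k:ℝ)*(1-c)))
          = Real.exp ((1-c) + (k:ℝ)*(1-c)) * c^k by rw [Real.exp_add]; ring]
      congr 2
      ring
    rw [hrhs]
    apply mul_le_mul_of_nonneg_left _ (Real.exp_pos _).le
    rw [div_le_iff₀ (by positivity)]
    calc (((k:ℝ)+1)*c)^k ≤ (Nat.factorial k) * Real.exp (k:ℝ) * Real.exp 1 * c^k := hnum
      _ = Real.exp (k:ℝ) * Real.exp 1 * c^k * (Nat.factorial k) := by ring
  calc stmt12u c k ≤ Real.exp (-(((k:ℝ)+1)*c)) * (((k:ℝ)+1) * ((((k:ℝ)+1)*c)^k / (Nat.factorial k))) := by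
        unfold stmt12u
        exact mul_le_mul_of_nonneg_left hsum (Real.exp_pos _).le
    _ = ((k:ℝ)+1) * (Real.exp (-(((k:ℝ)+1)*c)) * ((((k:ℝ)+1)*c)^k / (Nat.factorial k))) := by ring
    _ ≤ ((k:ℝ)+1) * (Real.exp (1-c) * (c * Real.exp (1-c))^k) := by
        apply mul_le_mul_of_nonneg_left hw (by positivity)
    _ = ((k:ℝ)+1) * Real.exp (1-c) * (c * Real.exp (1-c))^k := by ring

lemma stmt12_r_lt_one (c : ℝ) (hc : 1 < c) : c * Real.exp (1-c) < 1 := by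
  have h := Real.add_one_lt_exp (x := c-1) (by intro h; linarith [sub_eq_zero.mp h])
  have he : (0:ℝ) < Real.exp (1-c) := Real.exp_pos _
  have h2 : c < Real.exp (c-1) := by linarith
  have h3 : c * Real.exp (1-c) < Real.exp (c-1) * Real.exp (1-c) :=
    mul_lt_mul_of_pos_right h2 he
  rw [← Real.exp_add] at h3
  simpa using h3

lemma stmt12_T_tendsto (c : ℝ) (hc : 1 < c) :
    Filter.Tendsto (stmt12T c) Filter.atTop (nhds 0) := by
  set r := c * Real.exp (1-c) with hrdef
  have hr0 : 0 ≤ r := by positivity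
  have hr1 : r < 1 := stmt12_r_lt_one c hc
  have hrt : Filter.Tendsto (fun k : ℕ => r^k) Filter.atTop (nhds 0) :=
    tendsto_pow_atTop_nhds_zero_of_lt_one hr0 hr1
  have hu : Filter.Tendsto (stmt12u c) Filter.atTop (nhds 0) := by
    apply squeeze_zero (stmt12_u_nonneg c hc) (stmt12_u_le c hc)
    have h1 : Filter.Tendsto (fun k : ℕ => ((k:ℝ) * r^k) * Real.exp (1-c) + Real.exp (1-c) * r^k)
        Filter.atTop (nhds 0) := by
      have := ((tendsto_self_mul_const_pow_of_lt_one hr0 hr1).mul_const (Real.exp (1-c))).add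
        (hrt.const_mul (Real.exp (1-c)))
      simpa using this
    apply h1.congr
    intro k; ring
  have hd : Filter.Tendsto (stmt12d c) Filter.atTop (nhds 0) :=
    squeeze_zero (stmt12_d_nonneg c hc) (stmt12_d_le c hc) hrt
  rw [← Filter.tendsto_add_atTop_iff_nat 1]
  have : Filter.Tendsto (fun n : ℕ => (1-c) * stmt12u c n + stmt12d c (n+1))
      Filter.atTop (nhds 0) := by
    have := (hu.const_mul (1-c)).add ((Filter.tendsto_add_atTop_iff_nat 1).mpr hd)
    simpa using this
  exact this.congr (fun n => rfl)

/-- The absolutely continuous part of the D/M/1-LIFO equilibrium waiting-time density,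
`f x = μ^(k+1) * ζ₀ * x^(k-1) * (x - k*a) * exp (-μ*x) / k!` on `(k*a, (k+1)*a)`
(with `k = ⌊x/a⌋` and the convention `x⁻¹*(x-0) = 1` for `k = 0`),
integrates to `ζ₀` over `(0,∞)`. -/
theorem stmt12 (a μ ζ₀ : ℝ) (ha : 0 < a) (hμ : 0 < μ)
    (hz : ζ₀ ∈ Set.Ioo (0:ℝ) 1)
    (hfe : ζ₀ = Real.exp (-(a * μ) * (1 - ζ₀))) :
    let f : ℝ → ℝ := fun x =>
      let k : ℕ := ⌊x / a⌋₊
      if k = 0 then μ * ζ₀ * Real.exp (-μ * x)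
      else μ^(k+1) * ζ₀ * x^(k-1) * (x - k * a) * Real.exp (-μ * x) / (Nat.factorial k)
    (∫ x in Set.Ioi (0:ℝ), f x) = ζ₀ := by
  intro f
  set c : ℝ := a * μ with hc_def
  -- c > 1
  have hc : 1 < c := by
    have ht0 : 0 < 1 - ζ₀ := by linarith [hz.2]
    have h1 : Real.exp (-c * (1-ζ₀)) < Real.exp (-(1-ζ₀)) := by
      rw [← hfe]
      have := Real.add_one_lt_exp (x := -(1-ζ₀)) (by intro h; simp at h; linarith)
      linarith
    have h2 : -c * (1-ζ₀) < -(1-ζ₀) := by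
      exact (Real.exp_lt_exp).mp h1
    nlinarith
  have hz0 := hz.1
  -- the bins
  set S : ℕ → Set ℝ := fun k => Set.Ioc ((k:ℝ)*a) (((k:ℝ)+1)*a) with hS_def
  have hmeas : ∀ k, MeasurableSet (S k) := fun k => measurableSet_Ioc
  have hdisj : Pairwise (Function.onFun Disjoint S) := by
    have key : ∀ {i j : ℕ}, i < j → Disjoint (S i) (S j) := by
      intro i j h
      rw [hS_def]
      apply Set.Ioc_disjoint_Ioc.mpr
      have h1 : ((i:ℝ)+1) ≤ (j:ℝ) := by exact_mod_cast h
      have h2 : ((i:ℝ)+1)*a ≤ (j:ℝ)*a := by nlinarith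
      calc min (((i:ℝ)+1)*a) (((j:ℝ)+1)*a) ≤ ((i:ℝ)+1)*a := min_le_left _ _
        _ ≤ (j:ℝ)*a := h2
        _ ≤ max ((i:ℝ)*a) ((j:ℝ)*a) := le_max_right _ _
    intro i j hij
    rcases lt_or_gt_of_ne hij with h|h
    · exact key h
    · exact (key h).symm
  have hunion : Set.Ioi (0:ℝ) = ⋃ k, S k := by
    ext x
    simp only [Set.mem_Ioi, Set.mem_iUnion, hS_def, Set.mem_Ioc]
    constructor
    · intro hx
      have hxa : 0 < x / a := div_pos hx ha
      set n : ℕ := ⌈x / a⌉₊ with hn_def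
      have hn1 : 1 ≤ n := by
        rw [hn_def]
        exact Nat.one_le_ceil_iff.mpr hxa
      refine ⟨n - 1, ?_, ?_⟩
      · have h1 : ((n:ℝ)) < x/a + 1 := Nat.ceil_lt_add_one hxa.le
        have hcast : ((n-1 : ℕ) : ℝ) = (n:ℝ) - 1 := by
          push_cast [Nat.cast_sub hn1]; ring
        rw [hcast]
        have h2 : ((n:ℝ)-1) < x/a := by linarith
        have h3 := mul_lt_mul_of_pos_right h2 ha
        rwa [div_mul_cancel₀ x (ne_of_gt ha)] at h3
      · have h1 : x/a ≤ (n:ℝ) := Nat.le_ceil _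
        have hcast : ((n-1 : ℕ) : ℝ) + 1 = (n:ℝ) := by
          push_cast [Nat.cast_sub hn1]; ring
        rw [hcast]
        have h3 := mul_le_mul_of_nonneg_right h1 ha.le
        rwa [div_mul_cancel₀ x (ne_of_gt ha)] at h3
    · intro ⟨k, hk1, hk2⟩
      have : (0:ℝ) ≤ (k:ℝ)*a := by positivity
      linarith
  -- the piecewise densities
  set g : ℕ → ℝ → ℝ := fun k x => if k = 0 then μ * ζ₀ * Real.exp (-μ*x)
      else μ^(k+1) * ζ₀ * x^(k-1) * (x - (k:ℝ)*a) * Real.exp (-μ*x) / (Nat.factorial k)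
    with hg_def
  have hfg : ∀ k : ℕ, ∀ x ∈ Set.Ioo ((k:ℝ)*a) (((k:ℝ)+1)*a), f x = g k x := by
    intro k x hx
    have hx0 : 0 < x := lt_of_le_of_lt (by positivity : (0:ℝ) ≤ (k:ℝ)*a) hx.1
    have hfl : ⌊x/a⌋₊ = k := by
      rw [Nat.floor_eq_iff (by positivity : (0:ℝ) ≤ x/a)]
      exact ⟨(le_div_iff₀ ha).mpr (by linarith [hx.1]), (div_lt_iff₀ ha).mpr (by linarith [hx.2])⟩
    simp only [f, g, hfl]
  have hgc : ∀ k, Continuous (g k) := by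
    intro k
    rcases Nat.eq_zero_or_pos k with h | h
    · simp only [hg_def, h, if_pos]
      fun_prop
    · simp only [hg_def, Nat.pos_iff_ne_zero.mp h, if_false]
      fun_prop
  have hgpos : ∀ k, ∀ x ∈ S k, 0 ≤ g k x := by
    intro k x hx
    rcases Nat.eq_zero_or_pos k with h | h
    · simp only [hg_def, h, if_pos]
      positivity
    · simp only [hg_def, Nat.pos_iff_ne_zero.mp h, if_false]
      rw [hS_def] at hx
      have h1 : (0:ℝ) ≤ (k:ℝ)*a := by positivity
      have h2 : 0 ≤ x - (k:ℝ)*a := by linarith [hx.1]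
      have h3 : 0 ≤ x := by linarith [hx.1]
      positivity
  have hae : ∀ k, f =ᵐ[volume.restrict (S k)] g k := by
    intro k
    have h0 : ∀ᵐ x : ℝ, x ≠ ((k:ℝ)+1)*a := by
      rw [MeasureTheory.ae_iff]
      simp only [not_not]
      rw [show {x : ℝ | x = ((k:ℝ)+1)*a} = {((k:ℝ)+1)*a} from rfl]
      exact Real.volume_singleton
    filter_upwards [MeasureTheory.ae_restrict_of_ae h0, MeasureTheory.ae_restrict_mem (hmeas k)]
      with x hx hxm
    rw [hS_def] at hxm
    exact hfg k x ⟨hxm.1, lt_of_le_of_ne hxm.2 hx⟩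
  have hgint : ∀ k, IntegrableOn (g k) (S k) := by
    intro k
    rw [hS_def]
    exact (hgc k).integrableOn_Ioc
  set I : ℕ → ℝ := fun k => ∫ x in S k, g k x with hI_def
  have Inonneg : ∀ k, 0 ≤ I k := fun k => setIntegral_nonneg (hmeas k) (hgpos k)
  have Ival : ∀ k, I k = ζ₀ * (stmt12T c k - stmt12T c (k+1)) := by
    intro k
    cases k with
    | zero =>
        have hset : S 0 = Set.Ioc (0:ℝ) a := by rw [hS_def]; norm_num
        have h1 : I 0 = ∫ x in (0:ℝ)..a, g 0 x := by
          rw [intervalIntegral.integral_of_le ha.le]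
          show (∫ x in S 0, g 0 x) = _
          rw [hset]
        have h2 : (∫ x in (0:ℝ)..a, g 0 x) = ζ₀ * (1 - Real.exp (-(μ*a))) := by
          have hFTC : ∀ x ∈ Set.uIcc (0:ℝ) a,
              HasDerivAt (fun y : ℝ => -(ζ₀ * Real.exp (-(μ*y)))) (g 0 x) x := by
            intro x hx
            have hE : HasDerivAt (fun y : ℝ => Real.exp (-(μ*y))) (-μ * Real.exp (-(μ*x))) x := by
              simpa [mul_comm] using (((hasDerivAt_id x).const_mul μ).neg.exp)
            have := (hE.const_mul ζ₀).fun_neg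
            refine this.congr_deriv ?_
            simp only [hg_def, if_pos]
            ring_nf
          rw [intervalIntegral.integral_eq_sub_of_hasDerivAt hFTC]
          · norm_num; ring
          · apply Continuous.intervalIntegrable (hgc 0)
        have h3 : stmt12T c 0 - stmt12T c 1 = 1 - Real.exp (-(μ*a)) := by
          simp only [stmt12T, stmt12u, stmt12d]
          norm_num [Finset.sum_range_one]
          rw [show -(a*μ) = -(μ*a) by ring]
          ring
        rw [h1, h2, h3]
    | succ m =>
        have hset : S (m+1) = Set.Ioc (((m:ℝ)+1)*a) (((m:ℝ)+2)*a) := by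
          rw [hS_def]; push_cast; ring_nf
        have hle : ((m:ℝ)+1)*a ≤ ((m:ℝ)+2)*a := by nlinarith
        have h1 : I (m+1) = ∫ x in (((m:ℝ)+1)*a)..(((m:ℝ)+2)*a), g (m+1) x := by
          rw [intervalIntegral.integral_of_le hle]
          show (∫ x in S (m+1), g (m+1) x) = _
          rw [hset]
        have h2 : ∀ x : ℝ, g (m+1) x
            = ζ₀ * (μ^(m+2) * x^m * (x - ((m:ℝ)+1)*a) * Real.exp (-(μ*x)) / (Nat.factorial (m+1))) := by
          intro x
          simp only [hg_def, if_false]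
          push_cast
          ring_nf
        have h3 : (∫ x in (((m:ℝ)+1)*a)..(((m:ℝ)+2)*a), g (m+1) x)
            = ζ₀ * ∫ x in (((m:ℝ)+1)*a)..(((m:ℝ)+2)*a),
                μ^(m+2) * x^m * (x - ((m:ℝ)+1)*a) * Real.exp (-(μ*x)) / (Nat.factorial (m+1)) := by
          rw [← intervalIntegral.integral_const_mul]
          apply intervalIntegral.integral_congr
          intro x _
          exact h2 x
        rw [h1, h3, stmt12_FTC μ a m, stmt12_piece_eq μ a m]
  -- summation
  have hsum : HasSum I ζ₀ := by
    rw [hasSum_iff_tendsto_nat_of_nonneg Inonneg]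
    have hps : ∀ n : ℕ, ∑ i ∈ Finset.range n, I i = ζ₀ * (1 - stmt12T c n) := by
      intro n
      calc ∑ i ∈ Finset.range n, I i
          = ∑ i ∈ Finset.range n, ζ₀ * (stmt12T c i - stmt12T c (i+1)) := by
            exact Finset.sum_congr rfl (fun i _ => Ival i)
        _ = ζ₀ * ∑ i ∈ Finset.range n, (stmt12T c i - stmt12T c (i+1)) := by
            rw [Finset.mul_sum]
        _ = ζ₀ * (stmt12T c 0 - stmt12T c n) := by rw [Finset.sum_range_sub']
        _ = ζ₀ * (1 - stmt12T c n) := by rw [show stmt12T c 0 = 1 from rfl]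
    have hT := stmt12_T_tendsto c hc
    have h2 : Filter.Tendsto (fun n : ℕ => ζ₀ * (1 - stmt12T c n)) Filter.atTop (nhds ζ₀) := by
      have := (Filter.Tendsto.const_sub 1 hT).const_mul ζ₀
      simpa using this
    exact h2.congr (fun n => (hps n).symm)
  -- final assembly
  rw [hunion]
  have hfm : AEStronglyMeasurable f (volume.restrict (⋃ k, S k)) := by
    rw [aestronglyMeasurable_iUnion_iff]
    intro k
    exact ((hgc k).aestronglyMeasurable).congr (hae k).symm
  have hfnn : 0 ≤ᵐ[volume.restrict (⋃ k, S k)] f := by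
    apply (ae_restrict_iUnion_iff S (fun x => 0 ≤ f x)).mpr
    intro k
    filter_upwards [hae k, MeasureTheory.ae_restrict_mem (hmeas k)] with x hx hxm
    rw [hx]
    exact hgpos k x hxm
  rw [MeasureTheory.integral_eq_lintegral_of_nonneg_ae hfnn hfm]
  rw [MeasureTheory.lintegral_iUnion hmeas hdisj]
  have hpiece : ∀ k, (∫⁻ x in S k, ENNReal.ofReal (f x)) = ENNReal.ofReal (I k) := by
    intro k
    have hcongr : (fun x => ENNReal.ofReal (f x)) =ᵐ[volume.restrict (S k)]
        (fun x => ENNReal.ofReal (g k x)) := (hae k).mono (fun x hx => congrArg ENNReal.ofReal hx)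
    rw [MeasureTheory.lintegral_congr_ae hcongr]
    rw [← MeasureTheory.ofReal_integral_eq_lintegral_ofReal (hgint k)]
    filter_upwards [MeasureTheory.ae_restrict_mem (hmeas k)] with x hxm
    exact hgpos k x hxm
  simp_rw [hpiece]
  rw [← ENNReal.ofReal_tsum_of_nonneg Inonneg hsum.summable, hsum.tsum_eq]
  exact ENNReal.toReal_ofReal hz0.le
end

section
/- With ζ₀ ∈ (0,1), μ > 0, a > 0 satisfying ζ₀ = e^{-aμ(1-ζ₀)}, the variance of the idle-period distribution ζ₀·δ₀ + μζ₀(1-ζ₀)e^{μ(1-ζ₀)x}·1_{[0,a)}dx equals (1 + ζ₀ - 2aμζ₀)/(μ²(1-ζ₀)). -/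
open MeasureTheory Set intervalIntegral
open scoped NNReal ENNReal

lemma derivAux (β x : ℝ) : HasDerivAt (fun y => Real.exp (β*y)) (β * Real.exp (β*x)) x := by
  simpa [mul_comm, Function.comp_def] using (Real.hasDerivAt_exp (β*x)).comp x ((hasDerivAt_id x).const_mul β)

lemma intExp (β A : ℝ) (hβ : β ≠ 0) :
    ∫ x in (0:ℝ)..A, Real.exp (β*x) = (Real.exp (β*A) - 1)/β := by
  rw [integral_eq_sub_of_hasDerivAt (f := fun x => Real.exp (β*x)/β) (f' := fun x => Real.exp (β*x))
    (fun x _ => by simpa [mul_div_cancel_left₀ _ hβ] using (derivAux β x).div_const β)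
    ((Real.continuous_exp.comp (continuous_const.mul continuous_id)).intervalIntegrable 0 A)]
  simp [sub_div]

lemma intXExp (β A : ℝ) (hβ : β ≠ 0) :
    ∫ x in (0:ℝ)..A, x * Real.exp (β*x)
      = A*Real.exp (β*A)/β - (Real.exp (β*A) - 1)/β^2 := by
  have key : ∀ x : ℝ, HasDerivAt (fun y => Real.exp (β*y)*(y/β - 1/β^2))
      (x * Real.exp (β*x)) x := by
    intro x
    have h := (derivAux β x).mul ((hasDerivAt_id x).div_const β |>.sub_const (1/β^2))
    refine h.congr_deriv ?_
    simp only [id]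
    field_simp
    ring
  rw [integral_eq_sub_of_hasDerivAt (E := ℝ) (fun x _ => key x)
    ((continuous_id.mul (Real.continuous_exp.comp (continuous_const.mul continuous_id))).intervalIntegrable 0 A)]
  field_simp
  rw [mul_zero, Real.exp_zero]
  ring

lemma intX2Exp (β A : ℝ) (hβ : β ≠ 0) :
    ∫ x in (0:ℝ)..A, x^2 * Real.exp (β*x)
      = A^2*Real.exp (β*A)/β - 2*A*Real.exp (β*A)/β^2 + 2*(Real.exp (β*A) - 1)/β^3 := by
  have key : ∀ x : ℝ, HasDerivAt (fun y => Real.exp (β*y)*(y^2/β - 2*y/β^2 + 2/β^3))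
      (x^2 * Real.exp (β*x)) x := by
    intro x
    have hpoly : HasDerivAt (fun y : ℝ => y^2/β - 2*y/β^2 + 2/β^3) (2*x/β - 2/β^2) x := by
      have := (((hasDerivAt_pow 2 x).div_const β).sub (((hasDerivAt_id x).const_mul 2).div_const (β^2))).add_const (2/β^3)
      refine this.congr_deriv ?_
      ring
    have h := (derivAux β x).mul hpoly
    refine h.congr_deriv ?_
    field_simp
    ring
  rw [integral_eq_sub_of_hasDerivAt (E := ℝ) (fun x _ => key x)
    (((continuous_pow 2).mul (Real.continuous_exp.comp (continuous_const.mul continuous_id))).intervalIntegrable 0 A)]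
  field_simp
  rw [mul_zero, Real.exp_zero]
  ring

/-- With `ζ₀ ∈ (0,1)`, `μ > 0`, `a > 0` satisfying `ζ₀ = exp (-a*μ*(1-ζ₀))`, the
variance of the idle-period distribution
`ζ₀ • δ₀ + (density μ*ζ₀*(1-ζ₀)*exp (μ*(1-ζ₀)*x) on [0,a))` equals
`(1 + ζ₀ - 2*a*μ*ζ₀) / (μ²*(1-ζ₀))`. -/
theorem stmt19 (a μ ζ₀ : ℝ) (hμ : 0 < μ) (ha : 0 < a)
    (hz : ζ₀ ∈ Set.Ioo (0:ℝ) 1)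
    (hfe : ζ₀ = Real.exp (-(a * μ) * (1 - ζ₀))) :
    let P : Measure ℝ :=
      ENNReal.ofReal ζ₀ • Measure.dirac (0:ℝ) +
        (volume.restrict (Ico (0:ℝ) a)).withDensity
          (fun x => ENNReal.ofReal (μ * ζ₀ * (1 - ζ₀) * Real.exp (μ * (1 - ζ₀) * x)))
    ProbabilityTheory.variance (fun x => x) P
      = (1 + ζ₀ - 2 * a * μ * ζ₀) / (μ^2 * (1 - ζ₀)) := by
  obtain ⟨hz0, hz1⟩ := hz
  have h1z : 0 < 1 - ζ₀ := by linarith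
  set β := μ * (1 - ζ₀) with hβdef
  have hβ : 0 < β := mul_pos hμ h1z
  set c := μ * ζ₀ * (1 - ζ₀) with hcdef
  have hc : 0 < c := by positivity
  have hE : Real.exp (β * a) * ζ₀ = 1 := by
    conv_lhs => rw [hfe]
    rw [← Real.exp_add]
    rw [show β * a + -(a * μ) * (1 - ζ₀) = 0 by rw [hβdef]; ring, Real.exp_zero]
  have hE' : Real.exp (β * a) = 1 / ζ₀ := by
    field_simp
    linarith [hE]
  intro P
  have hPdef : P = ENNReal.ofReal ζ₀ • Measure.dirac (0:ℝ) +
      (volume.restrict (Ico (0:ℝ) a)).withDensity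
        (fun x => ENNReal.ofReal (c * Real.exp (β * x))) := rfl
  have hgcont : Continuous fun x : ℝ => c * Real.exp (β * x) :=
    continuous_const.mul (Real.continuous_exp.comp (continuous_const.mul continuous_id))
  have hgnn : ∀ x : ℝ, 0 ≤ c * Real.exp (β * x) := fun x => by positivity
  have hg_meas : Measurable fun x : ℝ => (c * Real.exp (β * x)).toNNReal :=
    hgcont.measurable.real_toNNReal
  have hg_int : IntegrableOn (fun x : ℝ => c * Real.exp (β * x)) (Ico 0 a) :=
    (hgcont.integrableOn_Icc).mono_set Ico_subset_Icc_self
  -- mass of the density part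
  have hIco : ∫ x in Ico (0:ℝ) a, c * Real.exp (β * x) = c * ((Real.exp (β*a) - 1)/β) := by
    rw [integral_Ico_eq_integral_Ioo, ← integral_Ioc_eq_integral_Ioo,
      ← intervalIntegral.integral_of_le ha.le,
      intervalIntegral.integral_const_mul, intExp β a hβ.ne']
  have hmass : P univ = 1 := by
    rw [hPdef, Measure.add_apply, Measure.smul_apply, withDensity_apply _ MeasurableSet.univ,
      Measure.restrict_univ]
    rw [← ofReal_integral_eq_lintegral_ofReal hg_int (Filter.Eventually.of_forall hgnn)]
    have hval : ∫ x in Ico (0:ℝ) a, c * Real.exp (β * x) = 1 - ζ₀ := by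
      rw [hIco, hE', hcdef, hβdef]
      field_simp
    rw [hval]
    simp only [measure_univ, smul_eq_mul, mul_one]
    rw [← ENNReal.ofReal_add hz0.le h1z.le]
    norm_num
  haveI : IsProbabilityMeasure P := ⟨hmass⟩
  -- a.e. support in [0, a]
  have hsupp : ∀ᵐ x ∂P, x ∈ Icc (0:ℝ) a := by
    rw [ae_iff]
    have hcompl : {x : ℝ | ¬ x ∈ Icc (0:ℝ) a} = (Icc (0:ℝ) a)ᶜ := rfl
    rw [hcompl, hPdef, Measure.add_apply, Measure.smul_apply,
      Measure.dirac_apply' _ measurableSet_Icc.compl,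
      withDensity_apply _ measurableSet_Icc.compl,
      Measure.restrict_restrict measurableSet_Icc.compl]
    have h0 : (0:ℝ) ∈ Icc (0:ℝ) a := ⟨le_refl 0, ha.le⟩
    have hempty : (Icc (0:ℝ) a)ᶜ ∩ Ico (0:ℝ) a = ∅ := by
      ext x
      simp only [mem_inter_iff, mem_compl_iff, mem_Icc, mem_Ico, mem_empty_iff_false, iff_false]
      rintro ⟨hx, hx1, hx2⟩
      exact hx ⟨hx1, hx2.le⟩
    rw [hempty, Measure.restrict_empty, lintegral_zero_measure]
    simp [indicator_of_notMem, h0]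
  have hmem : MeasureTheory.MemLp (fun x : ℝ => x) 2 P :=
    MeasureTheory.MemLp.of_bound measurable_id.aestronglyMeasurable a
      (hsupp.mono fun x hx => by
        rw [Real.norm_eq_abs, abs_of_nonneg hx.1]; exact hx.2)
  -- generic integral formula
  have key : ∀ f : ℝ → ℝ, Measurable f → Integrable f P →
      ∫ x, f x ∂P = ζ₀ * f 0 + ∫ x in (0:ℝ)..a, (c * Real.exp (β * x)) * f x := by
    intro f hf hfi
    rw [hPdef] at hfi
    rw [hPdef, integral_add_measure (integrable_add_measure.mp hfi).1
      (integrable_add_measure.mp hfi).2]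
    congr 1
    · rw [MeasureTheory.integral_smul_measure, integral_dirac]
      simp [ENNReal.toReal_ofReal hz0.le, smul_eq_mul]
    · rw [show (fun x : ℝ => ENNReal.ofReal (c * Real.exp (β * x)))
          = (fun x : ℝ => (((c * Real.exp (β * x)).toNNReal : ℝ≥0) : ℝ≥0∞)) from rfl,
        integral_withDensity_eq_integral_smul hg_meas]
      rw [show (fun x : ℝ => ((c * Real.exp (β * x)).toNNReal : ℝ≥0) • f x)
          = fun x : ℝ => (c * Real.exp (β * x)) * f x from funext fun x => by
            simp [NNReal.smul_def, Real.coe_toNNReal _ (hgnn x)]]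
      rw [integral_Ico_eq_integral_Ioo, ← integral_Ioc_eq_integral_Ioo,
        ← intervalIntegral.integral_of_le ha.le]
  have hint1 : Integrable (fun x : ℝ => x) P := hmem.integrable one_le_two
  have hint2 : Integrable (fun x : ℝ => x ^ 2) P := hmem.integrable_sq
  have e1 : ∫ x, x ∂P = ζ₀ * 0 + c * (a*Real.exp (β*a)/β - (Real.exp (β*a) - 1)/β^2) := by
    rw [key (fun x => x) measurable_id hint1]
    congr 1
    have hptw : ∀ x : ℝ, c * Real.exp (β*x) * x = c * (x * Real.exp (β*x)) :=
      fun x => by ring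
    simp only [hptw]
    rw [intervalIntegral.integral_const_mul, intXExp β a hβ.ne']
  have e2 : ∫ x, x ^ 2 ∂P = ζ₀ * 0 +
      c * (a^2*Real.exp (β*a)/β - 2*a*Real.exp (β*a)/β^2 + 2*(Real.exp (β*a) - 1)/β^3) := by
    rw [key (fun x => x ^ 2) (measurable_id.pow_const 2) hint2]
    have hptw : ∀ x : ℝ, c * Real.exp (β*x) * x ^ 2 = c * (x ^ 2 * Real.exp (β*x)) :=
      fun x => by ring
    simp only [hptw]
    rw [intervalIntegral.integral_const_mul, intX2Exp β a hβ.ne']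
    norm_num
  rw [ProbabilityTheory.variance_eq_sub hmem]
  have hpow : (fun x : ℝ => x) ^ 2 = fun x : ℝ => x ^ 2 := by ext x; simp
  rw [hpow]
  simp only []
  rw [e1, e2, hE', hcdef, hβdef]
  have hμ' : μ ≠ 0 := hμ.ne'
  have hz0' : ζ₀ ≠ 0 := hz0.ne'
  have h1z' : (1:ℝ) - ζ₀ ≠ 0 := h1z.ne'
  field_simp
  ring
end
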